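/- arXiv:1209.5192 — 3 statements merged into one kernel-verified Lean document; each statement's English description precedes it below -/
import Mathlib

section
/- For every positive integer l and all distinct positive integers j and k, A(l,j,k) > 2^{l-1}·T(l,j,k); that is, an incorrect transition-error claim (which indicates misaligned positions j ≠ k in the two configurations) leads the verifier to acceptance with probability at least 2^{l-1} times greater than the probability that it leads to a test (and hence possible rejection). -/
open Filter

noncomputable def A (l j k : ℕ) : ℝ :=
  (2:ℝ) ^ (-(4 * (l:ℤ) * j + l)) + (1 - (2:ℝ) ^ (-(4 * (l:ℤ) * j + l))) * (2:ℝ) ^ (-(4 * (l:ℤ) * k + l))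

noncomputable def T (l j k : ℕ) : ℝ :=
  (1 - A l j k) * (2:ℝ) ^ (-(2 * (l:ℤ) * (j + k)))

theorem stmt3 (l j k : ℕ) (hl : 0 < l) (hj : 0 < j) (hk : 0 < k) (hjk : j ≠ k) :
    A l j k > (2:ℝ) ^ ((l:ℤ) - 1) * T l j k := by
  have hl1 : (1:ℤ) ≤ (l:ℤ) := by exact_mod_cast hl
  have hj1 : (1:ℤ) ≤ (j:ℤ) := by exact_mod_cast hj
  have hk1 : (1:ℤ) ≤ (k:ℤ) := by exact_mod_cast hk
  set a : ℤ := -(4 * (l:ℤ) * j + l) with ha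
  set b : ℤ := -(4 * (l:ℤ) * k + l) with hb
  set e : ℤ := ((l:ℤ) - 1) + (-(2 * (l:ℤ) * (j + k))) with he
  have hA : A l j k = 2 ^ a + (1 - 2 ^ a) * 2 ^ b := rfl
  have h2 : (1:ℝ) < 2 := one_lt_two
  have hta : (0:ℝ) < 2 ^ a := zpow_pos (by norm_num) a
  have htb : (0:ℝ) < 2 ^ b := zpow_pos (by norm_num) b
  have hte : (0:ℝ) < 2 ^ e := zpow_pos (by norm_num) e
  have ha1 : (2:ℝ) ^ a < 1 := by
    calc (2:ℝ)^a < 2^(0:ℤ) := zpow_lt_zpow_right₀ h2 (by nlinarith)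
    _ = 1 := zpow_zero 2
  have hb1 : (2:ℝ) ^ b < 1 := by
    calc (2:ℝ)^b < 2^(0:ℤ) := zpow_lt_zpow_right₀ h2 (by nlinarith)
    _ = 1 := zpow_zero 2
  have hApos : 0 < A l j k := by rw [hA]; nlinarith
  have hRHS : (2:ℝ) ^ ((l:ℤ) - 1) * T l j k = (1 - A l j k) * 2 ^ e := by
    unfold T
    rw [he, zpow_add₀ (by norm_num : (2:ℝ) ≠ 0)]
    ring
  rw [hRHS]
  have key : (2:ℝ) ^ e ≤ A l j k := by
    rcases lt_or_gt_of_ne hjk with h | h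
    · have hjk' : (j:ℤ) + 1 ≤ k := by exact_mod_cast h
      have hea : e ≤ a := by simp only [ha, he]; nlinarith
      have h3 : (2:ℝ)^e ≤ 2^a := zpow_le_zpow_right₀ (le_of_lt h2) hea
      rw [hA]; nlinarith
    · have hjk' : (k:ℤ) + 1 ≤ j := by exact_mod_cast h
      have heb : e ≤ b + (-1) := by simp only [hb, he]; nlinarith
      have h3 : (2:ℝ)^e ≤ 2^(b + (-1:ℤ)) := zpow_le_zpow_right₀ (le_of_lt h2) heb
      have h4 : (2:ℝ)^(b + (-1:ℤ)) = 2^b * 2⁻¹ := by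
        rw [zpow_add₀ (by norm_num : (2:ℝ) ≠ 0)]; norm_num
      have ha2 : (2:ℝ) ^ a ≤ 2⁻¹ := by
        have h5 : (2:ℝ)^a ≤ 2^(-1:ℤ) := zpow_le_zpow_right₀ (le_of_lt h2) (by simp only [ha]; nlinarith)
        simpa using h5
      rw [hA]; nlinarith
  nlinarith
end

section
/- For all positive integers l and j, T(l,j,j) > 2^{l-2}·A(l,j,j); that is, a correct transition-error claim (indicating equal positions j = k in the two configurations) leads the verifier to test the indicated windows (and hence reject the invalid transition) with probability at least 2^{l-2} times greater than the probability of an outright acceptance. -/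
open Filter

theorem stmt6 (l j : ℕ) (hl : 0 < l) (hj : 0 < j) :
    T l j j > (2:ℝ) ^ ((l:ℤ) - 2) * A l j j := by
  have hl1 : (1:ℤ) ≤ l := by exact_mod_cast hl
  have hj1 : (1:ℤ) ≤ j := by exact_mod_cast hj
  set e : ℤ := 4 * (l:ℤ) * j + l with he
  have he5 : 5 ≤ e := by nlinarith
  set x : ℝ := (2:ℝ) ^ (-e) with hx
  have hx0 : 0 < x := by positivity
  have hx32 : x ≤ 1/32 := by
    have h : (2:ℝ) ^ (-e) ≤ (2:ℝ) ^ (-(5:ℤ)) :=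
      zpow_le_zpow_right₀ (by norm_num) (by omega)
    rw [hx]
    calc x ≤ (2:ℝ) ^ (-(5:ℤ)) := h
    _ = 1/32 := by norm_num
  have hA : A l j j = 2*x - x^2 := by unfold A; rw [he] at hx; rw [← hx]; ring
  have hpow : (2:ℝ) ^ (-(2 * (l:ℤ) * ((j:ℤ) + j))) = (2:ℝ)^(l:ℤ) * x := by
    rw [hx, ← zpow_add₀ (two_ne_zero)]
    congr 1; rw [he]; ring
  have hc : (2:ℝ)^((l:ℤ)-2) = (2:ℝ)^(l:ℤ) / 4 := by
    rw [zpow_sub₀ (by norm_num)]; norm_num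
  have hcpos : (0:ℝ) < (2:ℝ)^(l:ℤ) := by positivity
  unfold T
  rw [hA, hpow, hc]
  nlinarith [mul_pos hcpos hx0, sq_nonneg (1-x), mul_pos (mul_pos hcpos hx0) hx0]
end

section
/- For every real ε > 0 there exists a positive integer l₀ such that for every integer l ≥ l₀ and all positive integers j, k: if j ≠ k then T(l,j,k) < ε·(A(l,j,k) + T(l,j,k)), and A(l,j,j) < ε·(A(l,j,j) + T(l,j,j)). In other words, by tuning the constant l, the conditional probability (given that the processing of a transition-error claim halts) of reaching the incorrect outcome can be made smaller than any desired ε > 0, both when the claim is incorrect (j ≠ k) and when it is correct (j = k). -/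
open Filter

set_option maxHeartbeats 1600000 in
theorem stmt9 (ε : ℝ) (hε : 0 < ε) :
    ∃ l₀ : ℕ, 0 < l₀ ∧ ∀ l : ℕ, l₀ ≤ l → ∀ j k : ℕ, 0 < j → 0 < k →
      (j ≠ k → T l j k < ε * (A l j k + T l j k)) ∧
        A l j j < ε * (A l j j + T l j j) := by
  obtain ⟨n, hn⟩ := exists_pow_lt_of_lt_one (show (0:ℝ) < ε/4 by linarith)
    (show (1:ℝ)/2 < 1 by norm_num)
  refine ⟨n + 1, Nat.succ_pos n, ?_⟩
  intro l hl j k hj hk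
  have hl1 : (1:ℤ) ≤ (l:ℤ) := by exact_mod_cast (by omega : 1 ≤ l)
  -- 2^{-l} < ε/4
  have hzl : (2:ℝ) ^ (-(l:ℤ)) < ε / 4 := by
    have h1 : (2:ℝ) ^ (-(l:ℤ)) = (1/2:ℝ) ^ l := by
      rw [zpow_neg, zpow_natCast, one_div, inv_pow]
    have h2 : ((1:ℝ)/2) ^ l ≤ (1/2:ℝ) ^ n := by
      apply pow_le_pow_of_le_one (by norm_num) (by norm_num)
      omega
    rw [h1]; exact lt_of_le_of_lt h2 hn
  have hpos : ∀ z : ℤ, (0:ℝ) < (2:ℝ) ^ z := fun z => zpow_pos (by norm_num) z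
  have hle1 : ∀ z : ℤ, z ≤ 0 → (2:ℝ) ^ z ≤ 1 := by
    intro z hz
    simpa using zpow_le_zpow_right₀ (by norm_num : (1:ℝ) ≤ 2) hz
  have mono : ∀ z w : ℤ, z ≤ w → (2:ℝ) ^ z ≤ (2:ℝ) ^ w :=
    fun z w h => zpow_le_zpow_right₀ (by norm_num) h
  constructor
  · -- j ≠ k case
    intro hjk
    set a := (2:ℝ) ^ (-(4 * (l:ℤ) * j + l)) with ha
    set b := (2:ℝ) ^ (-(4 * (l:ℤ) * k + l)) with hb
    have ha0 : 0 < a := hpos _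
    have hb0 : 0 < b := hpos _
    have ha1 : a ≤ 1 := hle1 _ (neg_nonpos.mpr (by positivity))
    have hb1 : b ≤ 1 := hle1 _ (neg_nonpos.mpr (by positivity))
    have hA : A l j k = a + (1 - a) * b := rfl
    have hA0 : 0 < A l j k := by rw [hA]; nlinarith
    have hA1 : A l j k ≤ 1 := by rw [hA]; nlinarith
    set c := (2:ℝ) ^ (-(2 * (l:ℤ) * (j + k))) with hc
    have hc0 : 0 < c := hpos _
    have hT : T l j k = (1 - A l j k) * c := rfl
    have hT0 : 0 ≤ T l j k := by rw [hT]; nlinarith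
    have hTc : T l j k ≤ c := by rw [hT]; nlinarith
    -- key: c ≤ 2^{-l} * A
    have hkey : c ≤ (2:ℝ) ^ (-(l:ℤ)) * A l j k := by
      have hsplit : c = (2:ℝ) ^ (-(l:ℤ)) * (2:ℝ) ^ (-(2 * (l:ℤ) * (j + k)) + l) := by
        rw [hc, ← zpow_add₀ (by norm_num : (2:ℝ) ≠ 0)]
        ring_nf
      rw [hsplit]
      rcases lt_or_gt_of_ne hjk with h | h
      · -- j < k, use a ≤ A
        have h1 : (2:ℝ) ^ (-(2 * (l:ℤ) * (j + k)) + l) ≤ a := by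
          apply mono
        -- -(2l(j+k)) + l ≤ -(4lj+l)  ⟺  4lj + 2l ≤ 2l(j+k) ⟸ j+1 ≤ k
          have hjk' : (j:ℤ) + 1 ≤ k := by exact_mod_cast h
          nlinarith
        have h2 : a ≤ A l j k := by rw [hA]; nlinarith
        have := hpos (-(l:ℤ))
        nlinarith
      · have h1 : (2:ℝ) ^ (-(2 * (l:ℤ) * (j + k)) + l) ≤ b := by
          apply mono
          have hjk' : (k:ℤ) + 1 ≤ j := by exact_mod_cast h
          nlinarith
        have h2 : b ≤ A l j k := by rw [hA]; nlinarith
        have := hpos (-(l:ℤ))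
        nlinarith
    have h3 : T l j k ≤ (2:ℝ) ^ (-(l:ℤ)) * A l j k := le_trans hTc hkey
    have h4 : (2:ℝ) ^ (-(l:ℤ)) * A l j k < (ε/4) * A l j k :=
      mul_lt_mul_of_pos_right hzl hA0
    have h5 : (ε/4) * A l j k ≤ ε * A l j k :=
      mul_le_mul_of_nonneg_right (by linarith) hA0.le
    have h6 : ε * (A l j k + T l j k) = ε * A l j k + ε * T l j k := mul_add ..
    have h7 : 0 ≤ ε * T l j k := mul_nonneg hε.le hT0
    linarith
  · -- diagonal case
    set a := (2:ℝ) ^ (-(4 * (l:ℤ) * j + l)) with ha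
    have ha0 : 0 < a := hpos _
    have hA : A l j j = a + (1 - a) * a := rfl
    set c := (2:ℝ) ^ (-(2 * (l:ℤ) * (j + j))) with hc
    have hc0 : 0 < c := hpos _
    have hT : T l j j = (1 - A l j j) * c := rfl
    have hasmall : a ≤ (1:ℝ)/32 := by
      have : (2:ℝ) ^ (-(4 * (l:ℤ) * j + l)) ≤ (2:ℝ) ^ (-5:ℤ) := by
        apply mono
        have hj' : (1:ℤ) ≤ (j:ℤ) := by exact_mod_cast hj
        nlinarith
      rw [ha]
      calc (2:ℝ) ^ (-(4 * (l:ℤ) * j + l)) ≤ (2:ℝ) ^ (-5:ℤ) := this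
        _ = 1/32 := by norm_num
    have hA2a : A l j j ≤ 2 * a := by rw [hA]; nlinarith
    have hA0 : 0 < A l j j := by rw [hA]; nlinarith
    have h1A : (1:ℝ)/2 ≤ 1 - A l j j := by nlinarith
    have hTc : c / 2 ≤ T l j j := by rw [hT]; nlinarith
    have hT0 : 0 < T l j j := lt_of_lt_of_le (by positivity) hTc
    have hac : a = (2:ℝ) ^ (-(l:ℤ)) * c := by
      rw [ha, hc, ← zpow_add₀ (by norm_num : (2:ℝ) ≠ 0)]
      ring_nf
    -- A ≤ 2a = 2·2^{-l}·c ≤ 4·2^{-l}·T < ε T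
    have hAT : A l j j ≤ 4 * (2:ℝ) ^ (-(l:ℤ)) * T l j j := by
      have h2l0 := hpos (-(l:ℤ))
      nlinarith
    have h4 : 4 * (2:ℝ) ^ (-(l:ℤ)) * T l j j < ε * T l j j :=
      mul_lt_mul_of_pos_right (by linarith) hT0
    have h6 : ε * (A l j j + T l j j) = ε * A l j j + ε * T l j j := mul_add ..
    have h7 : 0 ≤ ε * A l j j := mul_nonneg hε.le hA0.le
    linarith
end
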